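/- For every admissible integer n, the maximum number of colliders in a chain–collider–fork decomposition of TT_n equals n(n−2)/4 when n is even, and equals (n−1)²/4 when n is odd. -/

import Mathlib

/-- The arc set of the transitive tournament `TT n` on vertices `Fin n`
(vertex `v_{i+1}` of the paper is index `i`): there is an arc `(i, j)` iff `i < j`. -/
def ttArcs (n : ℕ) : Finset (Fin n × Fin n) :=
  Finset.univ.filter fun p => p.1 < p.2

/-- A chain: a two-arc block `{(i,j), (j,k)}` with `i < j < k`. -/
def IsChainMotif {n : ℕ} (b : Finset (Fin n × Fin n)) : Prop :=
  ∃ i j k : Fin n, i < j ∧ j < k ∧ b = {(i, j), (j, k)}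

/-- A collider: a two-arc block `{(i,j), (k,j)}` with `i, k < j` and `i ≠ k`. -/
def IsColliderMotif {n : ℕ} (b : Finset (Fin n × Fin n)) : Prop :=
  ∃ i k j : Fin n, i < j ∧ k < j ∧ i ≠ k ∧ b = {(i, j), (k, j)}

/-- A fork: a two-arc block `{(i,j), (i,k)}` with `i < j`, `i < k` and `j ≠ k`. -/
def IsForkMotif {n : ℕ} (b : Finset (Fin n × Fin n)) : Prop :=
  ∃ i j k : Fin n, i < j ∧ i < k ∧ j ≠ k ∧ b = {(i, j), (i, k)}

instance {n : ℕ} : DecidablePred (IsChainMotif (n := n)) := fun b => by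
  unfold IsChainMotif; infer_instance

instance {n : ℕ} : DecidablePred (IsColliderMotif (n := n)) := fun b => by
  unfold IsColliderMotif; infer_instance

instance {n : ℕ} : DecidablePred (IsForkMotif (n := n)) := fun b => by
  unfold IsForkMotif; infer_instance

/-- `P` is a decomposition of the arc set of `TT n`: its blocks are pairwise
disjoint and their union is the whole arc set. -/
def IsTTDecomposition {n : ℕ} (P : Finset (Finset (Fin n × Fin n))) : Prop :=
  (P : Set (Finset (Fin n × Fin n))).PairwiseDisjoint id ∧ P.sup id = ttArcs n

/-- `n` is admissible iff `n ≡ 0` or `1 (mod 4)`. -/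
def Admissible (n : ℕ) : Prop := n % 4 = 0 ∨ n % 4 = 1

/-! ### Auxiliary development -/

section Aux

/-- The partner map on ℕ-pairs: pairs up the arcs of `TT n` into blocks. -/
def pnat : ℕ × ℕ → ℕ × ℕ := fun a =>
  if a.1 = 0 ∧ a.2 % 2 = 1 then (0, if a.2 % 4 = 1 then a.2 + 2 else a.2 - 2)
  else (if a.1 % 2 = a.2 % 2 then a.1 + 1 else a.1 - 1, a.2)

lemma pnat_spec {n i j : ℕ} (hij : i < j) (hj : j < n) (hadm : n % 4 = 0 ∨ n % 4 = 1) :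
    (pnat (i,j)).1 < (pnat (i,j)).2 ∧ (pnat (i,j)).2 < n ∧
    pnat (pnat (i,j)) = (i,j) ∧ pnat (i,j) ≠ (i,j) ∧
    ((i = 0 ∧ j % 2 = 1) → (pnat (i,j)).1 = i ∧ (pnat (i,j)).2 ≠ j) ∧
    (¬(i = 0 ∧ j % 2 = 1) → (pnat (i,j)).2 = j ∧ (pnat (i,j)).1 ≠ i ∧
      ¬((pnat (i,j)).1 = 0 ∧ (pnat (i,j)).2 % 2 = 1)) := by
  simp only [pnat]
  split_ifs <;> simp_all [Prod.ext_iff] <;> omega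

/-- The partner map on arcs of `TT n`. -/
def pfin (n : ℕ) (a : Fin n × Fin n) : Fin n × Fin n :=
  if h : (pnat (a.1.val, a.2.val)).1 < n ∧ (pnat (a.1.val, a.2.val)).2 < n then
    (⟨_, h.1⟩, ⟨_, h.2⟩) else a

lemma mem_ttArcs {n : ℕ} {a : Fin n × Fin n} : a ∈ ttArcs n ↔ a.1 < a.2 := by
  simp [ttArcs]

/-- An arc is a "fork arc" if it is of the form `(0, j)` with `j` odd. -/
def IsFA {n : ℕ} (a : Fin n × Fin n) : Prop := a.1.val = 0 ∧ a.2.val % 2 = 1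

instance {n : ℕ} : DecidablePred (IsFA (n := n)) := fun a => by unfold IsFA; infer_instance

section
variable {n : ℕ} (hadm : n % 4 = 0 ∨ n % 4 = 1)
include hadm

lemma pfin_eq {a : Fin n × Fin n} (ha : a ∈ ttArcs n) :
    ((pfin n a).1.val, (pfin n a).2.val) = pnat (a.1.val, a.2.val) := by
  rw [mem_ttArcs] at ha
  obtain ⟨h1, h2, _⟩ := pnat_spec (n := n) ha a.2.isLt hadm
  rw [pfin, dif_pos ⟨lt_trans h1 h2, h2⟩]

lemma pfin_spec {a : Fin n × Fin n} (ha : a ∈ ttArcs n) :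
    pfin n a ∈ ttArcs n ∧ pfin n (pfin n a) = a ∧ pfin n a ≠ a ∧
    (IsFA a → (pfin n a).1 = a.1 ∧ (pfin n a).2 ≠ a.2) ∧
    (¬ IsFA a → (pfin n a).2 = a.2 ∧ (pfin n a).1 ≠ a.1 ∧ ¬ IsFA (pfin n a)) := by
  have ha' := mem_ttArcs.mp ha
  obtain ⟨h1, h2, h3, h4, h5, h6⟩ := pnat_spec (n := n) ha' a.2.isLt hadm
  have he := pfin_eq hadm ha
  have e1 : (pfin n a).1.val = (pnat (a.1.val, a.2.val)).1 := congrArg Prod.fst he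
  have e2 : (pfin n a).2.val = (pnat (a.1.val, a.2.val)).2 := congrArg Prod.snd he
  have hpa : pfin n a ∈ ttArcs n := by
    rw [mem_ttArcs, Fin.lt_def]; omega
  refine ⟨hpa, ?_, ?_, ?_, ?_⟩
  · have he2 := pfin_eq hadm hpa
    rw [e1, e2, h3] at he2
    have : (pfin n (pfin n a)).1.val = a.1.val := congrArg Prod.fst he2
    have : (pfin n (pfin n a)).2.val = a.2.val := congrArg Prod.snd he2
    ext <;> simp_all [Fin.ext_iff]
  · intro hc
    rw [hc] at he
    exact h4 he.symm
  · intro hf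
    obtain ⟨c1, c2⟩ := h5 hf
    constructor
    · apply Fin.ext; omega
    · intro hc; rw [hc] at e2; omega
  · intro hf
    obtain ⟨c1, c2, c3⟩ := h6 hf
    refine ⟨Fin.ext (by omega), fun hc => by rw [hc] at e1; omega, ?_⟩
    intro ⟨d1, d2⟩
    exact c3 ⟨by omega, by omega⟩
end

-- collider blocks have constant head
lemma collider_head {n : ℕ} {b : Finset (Fin n × Fin n)} (hb : IsColliderMotif b) :
    ∀ x ∈ b, ∀ y ∈ b, x.2 = y.2 := by
  obtain ⟨i, k, j, _, _, _, rfl⟩ := hb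
  intro x hx y hy
  simp [Finset.mem_insert, Finset.mem_singleton] at hx hy
  rcases hx with rfl | rfl <;> rcases hy with rfl | rfl <;> rfl

lemma collider_card {n : ℕ} {b : Finset (Fin n × Fin n)} (hb : IsColliderMotif b) :
    b.card = 2 := by
  obtain ⟨i, k, j, _, _, hik, rfl⟩ := hb
  rw [Finset.card_insert_of_notMem (by simp [Prod.mk.injEq, hik]),
    Finset.card_singleton]

-- card of incoming arcs at head j
lemma card_inArcs {n : ℕ} (j : ℕ) :
    ((ttArcs n).filter fun a => (a.2 : ℕ) = j).card ≤ j := by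
  have h : ((ttArcs n).filter fun a => (a.2 : ℕ) = j).card ≤ (Finset.range j).card := by
    apply Finset.card_le_card_of_injOn (fun a => a.1.val)
    · intro a ha
      simp only [Finset.mem_coe, Finset.mem_filter, ttArcs, Fin.lt_def] at ha
      rw [Finset.mem_coe, Finset.mem_range]
      dsimp only
      omega
    · intro a ha b hb hab
      simp only [Finset.coe_filter, Set.mem_setOf_eq] at ha hb
      have h2 : a.2 = b.2 := Fin.ext (ha.2.trans hb.2.symm)
      exact Prod.ext (Fin.ext hab) h2
  simpa using h

lemma card_inArcs_eq {n : ℕ} (j : Fin n) :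
    ((ttArcs n).filter fun a => a.2 = j).card = j.val := by
  have h : ((ttArcs n).filter fun a => a.2 = j).card = (Finset.range j.val).card := by
    apply Finset.card_bij' (fun a _ => a.1.val)
      (fun m hm => (⟨m, lt_trans (Finset.mem_range.mp hm) j.isLt⟩, j))
    case hi =>
      intro a ha
      simp only [Finset.mem_filter, ttArcs, Fin.lt_def] at ha
      rw [Finset.mem_range]
      have h2 : (a.2 : ℕ) = j.val := congrArg Fin.val ha.2
      omega
    case hj =>
      intro m hm
      simp only [Finset.mem_filter, ttArcs, Finset.mem_univ, true_and, Fin.lt_def]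
      exact ⟨Finset.mem_range.mp hm, trivial⟩
    case left_inv =>
      intro a ha
      simp only [Finset.mem_filter] at ha
      exact Prod.ext (Fin.ext rfl) ha.2.symm
    case right_inv =>
      intro m hm
      rfl
  simpa using h

lemma two_mul_card_ttArcs {n : ℕ} : 2 * (ttArcs n).card = n * (n - 1) := by
  have h := Finset.card_eq_sum_card_fiberwise
    (f := fun a : Fin n × Fin n => a.2) (s := ttArcs n) (t := Finset.univ)
    (fun x _ => Finset.mem_univ _)
  rw [h]
  have hcc : ∀ j : Fin n, ((ttArcs n).filter fun a => a.2 = j).card = j.val :=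
    card_inArcs_eq
  rw [Finset.sum_congr rfl fun j _ => hcc j]
  rw [Fin.sum_univ_eq_sum_range (fun j => j) n]
  have := Finset.sum_range_id_mul_two n
  omega

lemma card_odd_range (n : ℕ) :
    ((Finset.range n).filter (fun j => j % 2 = 1)).card = n / 2 := by
  induction n with
  | zero => rfl
  | succ m ih =>
    rw [Finset.range_add_one, Finset.filter_insert]
    split_ifs with h
    · rw [Finset.card_insert_of_notMem (by simp)]; omega
    · omega

lemma sum_div2 (m : ℕ) :
    (∑ j ∈ Finset.range (2*m), j/2) = m*(m-1) ∧
    (∑ j ∈ Finset.range (2*m+1), j/2) = m*m := by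
  induction m with
  | zero => simp
  | succ p ih =>
    have h1 : (∑ j ∈ Finset.range (2*(p+1)), j/2) = (p+1)*p := by
      have e : 2*(p+1) = (2*p+1)+1 := by ring
      rw [e, Finset.sum_range_succ, ih.2]
      have h2 : (2*p+1)/2 = p := by omega
      rw [h2]; ring
    refine ⟨by rw [h1]; simp, ?_⟩
    rw [Finset.sum_range_succ, h1]
    have h3 : (2*(p+1))/2 = p+1 := by omega
    rw [h3]; ring

lemma sum_div2_range (n : ℕ) :
    (∑ j ∈ Finset.range n, j/2) = if Even n then n*(n-2)/4 else (n-1)^2/4 := by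
  rcases Nat.even_or_odd n with he | ho
  · rw [if_pos he]
    obtain ⟨m, rfl⟩ := he
    have e : m + m = 2*m := by ring
    rw [e, (sum_div2 m).1]
    have e2 : 2*m*(2*m-2) = 4*(m*(m-1)) := by
      have e3 : 2*m - 2 = 2*(m-1) := by omega
      rw [e3]; ring
    rw [e2, Nat.mul_div_cancel_left _ (by norm_num)]
  · rw [if_neg (by rwa [Nat.not_even_iff_odd])]
    obtain ⟨m, rfl⟩ := ho
    rw [(sum_div2 m).2]
    have e1 : 2*m+1-1 = 2*m := by omega
    have e2 : (2*m)^2 = 4*(m*m) := by ring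
    rw [e1, e2, Nat.mul_div_cancel_left _ (by norm_num)]

/-- Upper bound: any pairwise-disjoint family has at most `∑ j < n, j/2` collider blocks. -/
lemma collider_count_le {n : ℕ} (P : Finset (Finset (Fin n × Fin n)))
    (hdisj : (P : Set (Finset (Fin n × Fin n))).PairwiseDisjoint id) :
    (P.filter IsColliderMotif).card ≤ ∑ j ∈ Finset.range n, j/2 := by
  classical
  set C := P.filter IsColliderMotif with hC
  set f : Finset (Fin n × Fin n) → ℕ :=
    fun b => if h : (b.image fun a => (a.2 : ℕ)).Nonempty
      then (b.image fun a => (a.2 : ℕ)).min' h else 0 with hf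
  have hfmem : ∀ (b : Finset (Fin n × Fin n)), b.Nonempty →
      ∃ y ∈ b, (y.2 : ℕ) = f b := by
    intro b hb
    have hne : (b.image fun a => (a.2 : ℕ)).Nonempty := hb.image _
    have h1 : f b ∈ b.image fun a => (a.2 : ℕ) := by
      simp only [hf, dif_pos hne]
      exact Finset.min'_mem _ _
    obtain ⟨y, hy, hy2⟩ := Finset.mem_image.mp h1
    exact ⟨y, hy, hy2⟩
  have hmem : ∀ b ∈ C, f b ∈ Finset.range n := by
    intro b hb
    obtain ⟨i, k, j, _, _, _, hbe⟩ := (Finset.mem_filter.mp hb).2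
    have hne : b.Nonempty := by rw [hbe]; exact ⟨(i,j), by simp⟩
    obtain ⟨y, _, hy2⟩ := hfmem b hne
    rw [Finset.mem_range, ← hy2]
    exact y.2.isLt
  rw [Finset.card_eq_sum_card_fiberwise hmem]
  apply Finset.sum_le_sum
  intro j hj
  rw [Nat.le_div_iff_mul_le (by norm_num)]
  set D := C.filter (fun b => f b = j) with hD
  have hDP : ∀ b ∈ D, b ∈ P := fun b hb =>
    (Finset.mem_filter.mp ((Finset.mem_filter.mp hb).1)).1
  have hDcol : ∀ b ∈ D, IsColliderMotif b := fun b hb =>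
    (Finset.mem_filter.mp ((Finset.mem_filter.mp hb).1)).2
  have hsub : ∀ b ∈ D, b ⊆ (ttArcs n).filter (fun a => (a.2 : ℕ) = j) := by
    intro b hb x hx
    have hcol := hDcol b hb
    have hfb : f b = j := (Finset.mem_filter.mp hb).2
    have hne : b.Nonempty := ⟨x, hx⟩
    have hhead : (x.2 : ℕ) = j := by
      obtain ⟨y, hy, hy2⟩ := hfmem b hne
      have hxy := collider_head hcol x hx y hy
      rw [← hfb, ← hy2, hxy]
    rw [Finset.mem_filter]
    refine ⟨?_, hhead⟩
    obtain ⟨i, k, j', hij, hkj, _, rfl⟩ := hcol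
    rw [mem_ttArcs]
    rcases Finset.mem_insert.mp hx with rfl | hx'
    · exact hij
    · rw [Finset.mem_singleton.mp hx']; exact hkj
  have hdisj2 : ∀ x ∈ D, ∀ y ∈ D, x ≠ y → Disjoint (id x) (id y) := by
    intro x hx y hy hxy
    exact hdisj (Finset.mem_coe.mpr (hDP x hx)) (Finset.mem_coe.mpr (hDP y hy)) hxy
  calc D.card * 2 = ∑ b ∈ D, b.card := by
        rw [Finset.sum_congr rfl (fun b hb => collider_card (hDcol b hb)),
          Finset.sum_const, smul_eq_mul]
    _ = (D.biUnion id).card := (Finset.card_biUnion hdisj2).symm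
    _ ≤ ((ttArcs n).filter (fun a => (a.2 : ℕ) = j)).card := by
        apply Finset.card_le_card
        intro x hx
        obtain ⟨b, hb, hxb⟩ := Finset.mem_biUnion.mp hx
        exact hsub b hb hxb
    _ ≤ j := card_inArcs j

/-- The block containing arc `a`. -/
def blkF (n : ℕ) (a : Fin n × Fin n) : Finset (Fin n × Fin n) := {a, pfin n a}

lemma blk_mem_self {n : ℕ} (a : Fin n × Fin n) : a ∈ blkF n a := by simp [blkF]

/-- The explicit decomposition. -/
def Pdec (n : ℕ) : Finset (Finset (Fin n × Fin n)) := (ttArcs n).image (blkF n)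

section
variable {n : ℕ} (hadm : n % 4 = 0 ∨ n % 4 = 1)
include hadm

lemma blk_eq_of {a : Fin n × Fin n} (ha : a ∈ ttArcs n) :
    blkF n (pfin n a) = blkF n a := by
  unfold blkF
  rw [(pfin_spec hadm ha).2.1, Finset.pair_comm]

lemma Pdec_disj : ((Pdec n : Finset (Finset (Fin n × Fin n))) :
    Set (Finset (Fin n × Fin n))).PairwiseDisjoint id := by
  intro b1 h1 b2 h2 hne
  simp only [Finset.mem_coe, Pdec, Finset.mem_image] at h1 h2
  obtain ⟨a1, ha1, rfl⟩ := h1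
  obtain ⟨a2, ha2, rfl⟩ := h2
  rw [Function.onFun, Finset.disjoint_left]
  intro x hx1 hx2
  exfalso; apply hne
  simp only [id, blkF, Finset.mem_insert, Finset.mem_singleton] at hx1 hx2
  rcases hx1 with rfl | rfl <;> rcases hx2 with h | h
  · rw [h]
  · rw [h, blk_eq_of hadm ha2]
  · rw [← blk_eq_of hadm ha1, h]
  · have := congrArg (pfin n) (h : pfin n a1 = pfin n a2)
    rw [(pfin_spec hadm ha1).2.1, (pfin_spec hadm ha2).2.1] at this
    rw [this]

lemma Pdec_sup : (Pdec n).sup id = ttArcs n := by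
  apply Finset.Subset.antisymm
  · intro x hx
    rw [Finset.mem_sup] at hx
    obtain ⟨b, hb, hxb⟩ := hx
    obtain ⟨a, ha, rfl⟩ := Finset.mem_image.mp hb
    simp only [id, blkF, Finset.mem_insert, Finset.mem_singleton] at hxb
    rcases hxb with rfl | rfl
    · exact ha
    · exact (pfin_spec hadm ha).1
  · intro x hx
    rw [Finset.mem_sup]
    exact ⟨blkF n x, Finset.mem_image_of_mem _ hx, blk_mem_self x⟩

lemma blk_fork {a : Fin n × Fin n} (ha : a ∈ ttArcs n) (hfa : IsFA a) :
    IsForkMotif (blkF n a) ∧ ¬ IsColliderMotif (blkF n a) := by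
  obtain ⟨hpa, _, _, h4, _⟩ := pfin_spec hadm ha
  obtain ⟨e1, e2⟩ := h4 hfa
  constructor
  · refine ⟨a.1, a.2, (pfin n a).2, mem_ttArcs.mp ha, ?_, Ne.symm e2, ?_⟩
    · have h := mem_ttArcs.mp hpa; rwa [e1] at h
    · show blkF n a = {(a.1, a.2), (a.1, (pfin n a).2)}
      unfold blkF
      rw [show ((a.1, a.2) : Fin n × Fin n) = a from rfl,
        show ((a.1, (pfin n a).2) : Fin n × Fin n) = pfin n a from Prod.ext e1.symm rfl]
  · intro hcol
    exact e2 ((collider_head hcol a (by simp [blkF]) (pfin n a) (by simp [blkF])).symm)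

lemma blk_collider {a : Fin n × Fin n} (ha : a ∈ ttArcs n) (hfa : ¬ IsFA a) :
    IsColliderMotif (blkF n a) := by
  obtain ⟨hpa, _, _, _, h5⟩ := pfin_spec hadm ha
  obtain ⟨e1, e2, _⟩ := h5 hfa
  refine ⟨a.1, (pfin n a).1, a.2, mem_ttArcs.mp ha, ?_, fun h => e2 h.symm, ?_⟩
  · have h := mem_ttArcs.mp hpa; rwa [e1] at h
  · show blkF n a = {(a.1, a.2), ((pfin n a).1, a.2)}
    unfold blkF
    rw [show ((a.1, a.2) : Fin n × Fin n) = a from rfl,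
      show (((pfin n a).1, a.2) : Fin n × Fin n) = pfin n a from Prod.ext rfl e1.symm]

lemma Pdec_colliders :
    (Pdec n).filter IsColliderMotif
      = ((ttArcs n).filter (fun a => ¬ IsFA a)).image (blkF n) := by
  ext b
  simp only [Finset.mem_filter, Pdec, Finset.mem_image]
  constructor
  · rintro ⟨⟨a, ha, rfl⟩, hcol⟩
    exact ⟨a, ⟨ha, fun hfa => (blk_fork hadm ha hfa).2 hcol⟩, rfl⟩
  · rintro ⟨a, ha, rfl⟩
    exact ⟨⟨a, ha.1, rfl⟩, blk_collider hadm ha.1 ha.2⟩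

lemma Cset_card :
    ((ttArcs n).filter (fun a => ¬ IsFA a)).card
      = 2 * ((((ttArcs n).filter (fun a => ¬ IsFA a)).image (blkF n)).card) := by
  classical
  set C := (ttArcs n).filter (fun a => ¬ IsFA a) with hCdef
  have hpC : ∀ a ∈ C, pfin n a ∈ C := by
    intro a ha
    rw [hCdef, Finset.mem_filter] at ha ⊢
    obtain ⟨hpa, _, _, _, h5⟩ := pfin_spec hadm ha.1
    exact ⟨hpa, (h5 ha.2).2.2⟩
  rw [Finset.card_eq_sum_card_image (blkF n) C]
  have hfib : ∀ b ∈ C.image (blkF n), (C.filter (fun x => blkF n x = b)).card = 2 := by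
    intro b hb
    obtain ⟨a, haC, rfl⟩ := Finset.mem_image.mp hb
    have haA : a ∈ ttArcs n := (Finset.mem_filter.mp haC).1
    have hEq : C.filter (fun x => blkF n x = blkF n a) = {a, pfin n a} := by
      ext x
      simp only [Finset.mem_filter, Finset.mem_insert, Finset.mem_singleton]
      constructor
      · rintro ⟨hxC, he⟩
        have hx : x ∈ blkF n x := blk_mem_self x
        rw [he] at hx
        simpa [blkF] using hx
      · rintro (rfl | rfl)
        · exact ⟨haC, rfl⟩
        · exact ⟨hpC a haC, blk_eq_of hadm haA⟩
    rw [hEq, Finset.card_insert_of_notMem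
      (by simp only [Finset.mem_singleton]; exact fun h => (pfin_spec hadm haA).2.2.1 h.symm),
      Finset.card_singleton]
  rw [Finset.sum_congr rfl hfib, Finset.sum_const, smul_eq_mul, Nat.mul_comm]

lemma F_card : ((ttArcs n).filter IsFA).card = n / 2 := by
  rw [← card_odd_range n]
  apply Finset.card_bij' (fun (a : Fin n × Fin n) (_ : a ∈ (ttArcs n).filter IsFA) => (a.2 : ℕ))
    (fun (m : ℕ) (hm : m ∈ (Finset.range n).filter (fun j => j % 2 = 1)) =>
      ((⟨0, lt_of_le_of_lt (Nat.zero_le m) (Finset.mem_range.mp (Finset.mem_filter.mp hm).1)⟩ : Fin n),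
       (⟨m, Finset.mem_range.mp (Finset.mem_filter.mp hm).1⟩ : Fin n)))
  case hi =>
    intro a ha
    rw [Finset.mem_filter] at ha ⊢
    exact ⟨Finset.mem_range.mpr a.2.isLt, ha.2.2⟩
  case hj =>
    intro m hm
    rw [Finset.mem_filter] at hm ⊢
    refine ⟨mem_ttArcs.mpr ?_, rfl, hm.2⟩
    rw [Fin.lt_def]
    simp only
    omega
  case left_inv =>
    intro a ha
    rw [Finset.mem_filter] at ha
    exact Prod.ext (Fin.ext ha.2.1.symm) (Fin.ext rfl)
  case right_inv =>
    intro m hm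
    rfl

end

end Aux

theorem tt_max_colliders_in_decomposition (n : ℕ) (hadm : Admissible n) :
    IsGreatest
      {m : ℕ | ∃ P : Finset (Finset (Fin n × Fin n)),
        IsTTDecomposition P ∧ (∀ b ∈ P, IsChainMotif b ∨ IsColliderMotif b ∨ IsForkMotif b) ∧ (P.filter IsColliderMotif).card = m}
      (if Even n then n * (n - 2) / 4 else (n - 1) ^ 2 / 4) := by
  have hadm' : n % 4 = 0 ∨ n % 4 = 1 := hadm
  constructor
  · -- membership: the explicit decomposition `Pdec n`
    refine ⟨Pdec n, ⟨Pdec_disj hadm', Pdec_sup hadm'⟩, ?_, ?_⟩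
    · intro b hb
      obtain ⟨a, ha, rfl⟩ := Finset.mem_image.mp hb
      by_cases hfa : IsFA a
      · exact Or.inr (Or.inr (blk_fork hadm' ha hfa).1)
      · exact Or.inr (Or.inl (blk_collider hadm' ha hfa))
    · -- count the colliders
      have h1 : 2 * ((Pdec n).filter IsColliderMotif).card
          = ((ttArcs n).filter (fun a => ¬ IsFA a)).card := by
        rw [Pdec_colliders hadm']
        exact (Cset_card hadm').symm
      have h2 := Finset.card_filter_add_card_filter_not
        (s := ttArcs n) IsFA
      have h3 := two_mul_card_ttArcs (n := n)
      have h4 := F_card hadm'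
      have hle : n ≤ n * n := by nlinarith
      have e1 : n * (n - 1) = n * n - n := by
        rw [Nat.mul_sub, Nat.mul_one]
      rw [e1] at h3
      rcases Nat.even_or_odd n with he | ho
      · rw [if_pos he]
        rw [Nat.even_iff] at he
        have e2 : n * (n - 2) = n * n - n * 2 := Nat.mul_sub n n 2
        rw [e2]
        generalize n * n = M at h3 hle ⊢
        omega
      · rw [if_neg (by rwa [Nat.not_even_iff_odd])]
        rw [Nat.odd_iff] at ho
        have e2 : (n - 1) ^ 2 = (n * n - n) - (n - 1) := by
          rw [sq, Nat.sub_mul, e1, Nat.one_mul]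
        rw [e2]
        generalize n * n = M at h3 hle ⊢
        omega
  · -- upper bound
    rintro m ⟨P, ⟨hdisj, _⟩, _, rfl⟩
    calc (P.filter IsColliderMotif).card
        ≤ ∑ j ∈ Finset.range n, j / 2 := collider_count_le P hdisj
      _ = _ := sum_div2_range n
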